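/- For s > 1, the total variation distance between N(0, s²) and N(0, 1) equals F(s²·log(s²)/(s² - 1)) - F(log(s²)/(s² - 1)), where F is the c.d.f. of the chi-square distribution with one degree of freedom. -/

import Mathlib

open MeasureTheory ProbabilityTheory Real Set
open scoped NNReal ENNReal

/-- Total variation distance between two measures on ℝ:
the supremum over measurable sets of the absolute difference of the probabilities. -/
noncomputable def tvDist (P Q : Measure ℝ) : ℝ :=
  sSup {x | ∃ A : Set ℝ, MeasurableSet A ∧ x = |(P A).toReal - (Q A).toReal|}

/-- Standard normal cumulative distribution function. -/
noncomputable def stdNormalCDF (x : ℝ) : ℝ :=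
  ∫ u in Iic x, Real.exp (-u ^ 2 / 2) / Real.sqrt (2 * Real.pi)

/-- C.d.f. of the chi-square distribution with one degree of freedom. -/
noncomputable def chiSqOneCDF (x : ℝ) : ℝ := 2 * stdNormalCDF (Real.sqrt x) - 1

lemma gauss_toReal {v : ℝ≥0} (hv : v ≠ 0) (A : Set ℝ) :
    ((gaussianReal 0 v) A).toReal = ∫ x in A, gaussianPDFReal 0 v x := by
  rw [gaussianReal_apply_eq_integral 0 hv,
    ENNReal.toReal_ofReal (integral_nonneg fun x => gaussianPDFReal_nonneg _ _ _)]

lemma std_pdf_eq (x : ℝ) :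
    gaussianPDFReal 0 1 x = Real.exp (-x ^ 2 / 2) / Real.sqrt (2 * π) := by
  rw [gaussianPDFReal]
  push_cast
  rw [sub_zero, mul_one, mul_one]
  ring

lemma cdf_one (u : ℝ) : ∫ x in Iic u, gaussianPDFReal 0 1 x = stdNormalCDF u := by
  rw [stdNormalCDF]
  simp_rw [std_pdf_eq]

lemma cdf_scaled {σ : ℝ} (hσ : 0 < σ) {v : ℝ≥0} (hvc : (v : ℝ) = σ ^ 2) (t : ℝ) :
    ∫ x in Iic t, gaussianPDFReal 0 v x = stdNormalCDF (t / σ) := by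
  have hv : v ≠ 0 := by
    intro h
    rw [h] at hvc
    simp at hvc
    nlinarith
  have hkey : (gaussianReal 0 1).map (σ * ·) = gaussianReal 0 v := by
    rw [gaussianReal_map_const_mul]
    congr 1
    · ring
    · rw [mul_one]
      exact NNReal.coe_injective (by simp [hvc])
  have hmeas : (gaussianReal 0 v) (Iic t) = (gaussianReal 0 1) (Iic (t / σ)) := by
    rw [← hkey, Measure.map_apply (measurable_const_mul σ) measurableSet_Iic]
    congr 1
    ext x
    simp only [mem_preimage, mem_Iic]
    rw [le_div_iff₀ hσ, mul_comm]
  have h1 := gauss_toReal hv (Iic t)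
  have h2 := gauss_toReal one_ne_zero (Iic (t / σ))
  rw [hmeas, h2, cdf_one] at h1
  exact h1.symm

lemma stdNormalCDF_neg (u : ℝ) : stdNormalCDF (-u) = 1 - stdNormalCDF u := by
  have hint : Integrable (gaussianPDFReal 0 1) := integrable_gaussianPDFReal 0 1
  have htot : ∫ x, gaussianPDFReal 0 1 x = 1 := integral_gaussianPDFReal_eq_one 0 one_ne_zero
  have hcompl := integral_add_compl (measurableSet_Iic (a := u)) hint
  rw [compl_Iic, htot] at hcompl
  have heven : ∀ x : ℝ, gaussianPDFReal 0 1 (-x) = gaussianPDFReal 0 1 x := by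
    intro x
    simp [gaussianPDFReal, neg_sq]
  have hneg : ∫ x in Iic (-u), gaussianPDFReal 0 1 x = ∫ x in Ioi u, gaussianPDFReal 0 1 x := by
    have h := integral_comp_neg_Iic (-u) (gaussianPDFReal 0 1)
    simp_rw [heven, neg_neg] at h
    exact h
  rw [← cdf_one, ← cdf_one, hneg]
  linarith

lemma icc_integral (v : ℝ≥0) {t : ℝ} (ht : 0 ≤ t) :
    ∫ x in Icc (-t) t, gaussianPDFReal 0 v x
      = (∫ x in Iic t, gaussianPDFReal 0 v x) - ∫ x in Iic (-t), gaussianPDFReal 0 v x := by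
  rw [intervalIntegral.integral_Iic_sub_Iic ((integrable_gaussianPDFReal 0 v).integrableOn)
    ((integrable_gaussianPDFReal 0 v).integrableOn),
    intervalIntegral.integral_of_le (by linarith), ← integral_Icc_eq_integral_Ioc]

theorem stmt8 (s : ℝ) (hs : 1 < s) :
    tvDist (gaussianReal 0 (Real.toNNReal (s ^ 2))) (gaussianReal 0 1)
      = chiSqOneCDF (s ^ 2 * Real.log (s ^ 2) / (s ^ 2 - 1))
        - chiSqOneCDF (Real.log (s ^ 2) / (s ^ 2 - 1)) := by
  have hs0 : 0 < s := lt_trans one_pos hs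
  have hs2 : 1 < s ^ 2 := by nlinarith
  set v : ℝ≥0 := Real.toNNReal (s ^ 2) with hv_def
  have hvc : (v : ℝ) = s ^ 2 := Real.coe_toNNReal _ (by positivity)
  have hv : v ≠ 0 := by
    intro h
    rw [h] at hvc
    simp at hvc
    nlinarith
  set p := gaussianPDFReal 0 v with hp_def
  set q := gaussianPDFReal 0 1 with hq_def
  set f : ℝ → ℝ := fun x => p x - q x with hf_def
  have hp_int : Integrable p := integrable_gaussianPDFReal 0 v
  have hq_int : Integrable q := integrable_gaussianPDFReal 0 1
  have hf_int : Integrable f := hp_int.sub hq_int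
  have hf_tot : ∫ x, f x = 0 := by
    rw [hf_def]
    rw [integral_sub hp_int hq_int, hp_def, hq_def, integral_gaussianPDFReal_eq_one 0 hv,
      integral_gaussianPDFReal_eq_one 0 one_ne_zero, sub_self]
  set a := s ^ 2 * Real.log (s ^ 2) / (s ^ 2 - 1) with ha_def
  set b := Real.log (s ^ 2) / (s ^ 2 - 1) with hb_def
  have hlog : 0 < Real.log (s ^ 2) := Real.log_pos hs2
  have hb_pos : 0 < b := div_pos hlog (by linarith)
  have hab : a = s ^ 2 * b := by rw [ha_def, hb_def]; ring
  have ha_pos : 0 < a := by rw [hab]; positivity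
  set B : Set ℝ := {x | a < x ^ 2} with hB_def
  have hB_meas : MeasurableSet B :=
    measurableSet_lt measurable_const (measurable_id.pow_const 2)
  -- characterization of B
  have hchar : ∀ x : ℝ, x ∈ B ↔ q x < p x := by
    intro x
    have h2pi : (0:ℝ) < Real.sqrt (2 * π) := Real.sqrt_pos.2 (by positivity)
    have hqx : q x = (Real.sqrt (2 * π))⁻¹ * Real.exp (-x ^ 2 / 2) := by
      rw [hq_def, gaussianPDFReal]
      push_cast
      rw [sub_zero, mul_one, mul_one]
    have hsqrtv : Real.sqrt (2 * π * v) = Real.sqrt (2 * π) * s := by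
      rw [hvc, show 2 * π * s ^ 2 = (2 * π) * s ^ 2 by ring, Real.sqrt_mul (by positivity),
        Real.sqrt_sq hs0.le]
    have hpx : p x = (Real.sqrt (2 * π))⁻¹ * (Real.exp (-x ^ 2 / (2 * s ^ 2)) / s) := by
      rw [hp_def, gaussianPDFReal, hsqrtv, sub_zero, hvc, mul_inv]
      ring
    rw [hqx, hpx]
    rw [mul_lt_mul_iff_right₀ (inv_pos.2 h2pi), lt_div_iff₀ hs0]
    rw [show Real.exp (-x ^ 2 / 2) * s = Real.exp (-x ^ 2 / 2 + Real.log s) by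
      rw [Real.exp_add, Real.exp_log hs0]]
    rw [Real.exp_lt_exp]
    have hlogs : Real.log (s ^ 2) = 2 * Real.log s := by
      rw [show s ^ 2 = s ^ (2:ℕ) by norm_num, Real.log_pow]
      push_cast; ring
    have hden : (0:ℝ) < s ^ 2 - 1 := by linarith
    have haval : a * (s ^ 2 - 1) = s ^ 2 * (2 * Real.log s) := by
      rw [ha_def, hlogs, div_mul_cancel₀]
      linarith
    constructor
    · intro hx
      have hx' : a < x ^ 2 := hx
      have h1 : s ^ 2 * (2 * Real.log s) < x ^ 2 * (s ^ 2 - 1) := by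
        rw [← haval]; nlinarith
      rw [← mul_lt_mul_iff_left₀ (show (0:ℝ) < 2 * s ^ 2 by positivity)]
      rw [div_mul_cancel₀ (-x ^ 2) (show (2 * s ^ 2 : ℝ) ≠ 0 by positivity)]
      nlinarith
    · intro hx
      have h1 := (mul_lt_mul_iff_left₀ (show (0:ℝ) < 2 * s ^ 2 by positivity)).2 hx
      rw [div_mul_cancel₀ (-x ^ 2) (show (2 * s ^ 2 : ℝ) ≠ 0 by positivity)] at h1
      show a < x ^ 2
      have h2 : a * (s ^ 2 - 1) < x ^ 2 * (s ^ 2 - 1) := by rw [haval]; nlinarith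
      exact (mul_lt_mul_iff_left₀ hden).1 h2
  have hf_nonneg_B : ∀ x ∈ B, 0 ≤ f x := fun x hx => sub_nonneg.2 ((hchar x).1 hx).le
  have hf_nonpos_Bc : ∀ x ∈ Bᶜ, f x ≤ 0 := fun x hx =>
    sub_nonpos.2 (not_lt.1 fun h => hx ((hchar x).2 h))
  set M : ℝ := ∫ x in B, f x with hM_def
  have hM_nonneg : 0 ≤ M := setIntegral_nonneg hB_meas hf_nonneg_B
  -- upper bound for any measurable set
  have key : ∀ C : Set ℝ, MeasurableSet C → ∫ x in C, f x ≤ M := by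
    intro C hC
    have hdisj : Disjoint (C ∩ B) (C ∩ Bᶜ) :=
      disjoint_compl_right.mono inter_subset_right inter_subset_right
    have h1 : ∫ x in C, f x = (∫ x in C ∩ B, f x) + ∫ x in C ∩ Bᶜ, f x := by
      rw [← setIntegral_union hdisj (hC.inter hB_meas.compl)
        hf_int.integrableOn hf_int.integrableOn, inter_union_compl]
    have h2 : ∫ x in C ∩ Bᶜ, f x ≤ 0 :=
      setIntegral_nonpos (hC.inter hB_meas.compl) fun x hx => hf_nonpos_Bc x hx.2
    have h3 : ∫ x in C ∩ B, f x ≤ M := by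
      apply setIntegral_mono_set hf_int.integrableOn
      · exact (ae_restrict_iff' hB_meas).2 (ae_of_all _ hf_nonneg_B)
      · exact HasSubset.Subset.eventuallyLE inter_subset_right
    linarith
  have hub : ∀ C : Set ℝ, MeasurableSet C → |∫ x in C, f x| ≤ M := by
    intro C hC
    rw [abs_le]
    refine ⟨?_, key C hC⟩
    have hcompl := integral_add_compl hC hf_int
    rw [hf_tot] at hcompl
    have := key Cᶜ hC.compl
    linarith
  -- rewrite elements of the sup set as integrals of f
  have helt : ∀ C : Set ℝ,
      |((gaussianReal 0 v) C).toReal - ((gaussianReal 0 1) C).toReal| = |∫ x in C, f x| := by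
    intro C
    rw [gauss_toReal hv, gauss_toReal one_ne_zero,
      ← integral_sub hp_int.integrableOn hq_int.integrableOn]
  -- the supremum equals M
  have hsup : tvDist (gaussianReal 0 v) (gaussianReal 0 1) = M := by
    rw [tvDist]
    have hbd : ∀ x ∈ {x | ∃ A : Set ℝ, MeasurableSet A ∧
        x = |((gaussianReal 0 v) A).toReal - ((gaussianReal 0 1) A).toReal|}, x ≤ M := by
      rintro x ⟨C, hC, rfl⟩
      rw [helt]
      exact hub C hC
    have hne : {x | ∃ A : Set ℝ, MeasurableSet A ∧
        x = |((gaussianReal 0 v) A).toReal - ((gaussianReal 0 1) A).toReal|}.Nonempty :=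
      ⟨0, ∅, MeasurableSet.empty, by simp⟩
    refine le_antisymm (csSup_le hne hbd) (le_csSup ⟨M, fun x hx => hbd x hx⟩ ?_)
    exact ⟨B, hB_meas, by rw [helt, abs_of_nonneg hM_nonneg]⟩
  rw [hsup]
  -- now compute M
  have hBc : Bᶜ = Icc (-Real.sqrt a) (Real.sqrt a) := by
    ext x
    simp only [mem_compl_iff, hB_def, mem_setOf_eq, not_lt, mem_Icc]
    rw [show (x ^ 2 ≤ a ↔ Real.sqrt (x ^ 2) ≤ Real.sqrt a) from
      (Real.sqrt_le_sqrt_iff ha_pos.le).symm, Real.sqrt_sq_eq_abs, abs_le]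
  have hMc : M = - ∫ x in Bᶜ, f x := by
    have := integral_add_compl hB_meas hf_int
    rw [hf_tot] at this
    linarith
  have hsqrt_a_nonneg : 0 ≤ Real.sqrt a := Real.sqrt_nonneg a
  have hsab : Real.sqrt a / s = Real.sqrt b := by
    rw [hab, show s ^ 2 * b = s ^ 2 * b by ring, Real.sqrt_mul (by positivity),
      Real.sqrt_sq hs0.le, mul_div_assoc, mul_comm]
    field_simp
  have hIccq : ∫ x in Icc (-Real.sqrt a) (Real.sqrt a), q x
      = 2 * stdNormalCDF (Real.sqrt a) - 1 := by
    rw [hq_def, icc_integral 1 hsqrt_a_nonneg, cdf_one, cdf_one, stdNormalCDF_neg]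
    ring
  have hIccp : ∫ x in Icc (-Real.sqrt a) (Real.sqrt a), p x
      = 2 * stdNormalCDF (Real.sqrt b) - 1 := by
    rw [hp_def, icc_integral v hsqrt_a_nonneg, cdf_scaled hs0 hvc, cdf_scaled hs0 hvc,
      hsab, neg_div, hsab, stdNormalCDF_neg]
    ring
  have hfsub : ∫ x in Bᶜ, f x = (∫ x in Bᶜ, p x) - ∫ x in Bᶜ, q x :=
    integral_sub hp_int.integrableOn hq_int.integrableOn
  rw [hMc, hfsub, hBc, hIccq, hIccp, chiSqOneCDF, chiSqOneCDF]
  ring
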